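/- Fix constants c_1, c_2 > 0 and set R_{ℓ,δ}(η',η'') = p_{ℓ,δ}(η',η'') + R_0(c_1 ℓ_* δ, (c_2+4) δ^{1/2}), and let Ẽ^η_{00} = ⋃_ℓ ⋃_{η'+η''=η, η'∈J̃_1, η''∈J̃_2} R_{ℓ,δ}(η',η''), where ℓ ranges over ℕ_0^* with 0 ≤ ℓ ≤ (π/8) δ^{-1/2} − 1. Fix η' ∈ J̃_1 and η'' ∈ J̃_2 with η' + η'' = η. Then there exists a_0 > 0, independent of δ (and of η', η''), such that for every a with a_0 ≤ a ≤ (π/8) δ^{-1/2}: 𝓔̃_a(η',η'') ∩ Ẽ^η_{00} = ∅ and ℛ_{a δ^{1/2}}(Ẽ^η_{00}) ∩ 𝓔̃(η',η'') = ∅. -/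

import Mathlib

open Set Pointwise

noncomputable def GammaD (δ μ : ℝ) : Set ℂ :=
  {ξ : ℂ | ξ ≠ 0 ∧ μ * Real.sqrt δ ≤ ξ.arg ∧ ξ.arg < (μ + 1) * Real.sqrt δ}

def calND (δ : ℝ) : Set ℤ :=
  {μ : ℤ | |(μ : ℝ)| ≤ Real.pi / 8 * (Real.sqrt δ)⁻¹ - 1}

noncomputable def uSetD (δ μ : ℝ) (J : Set ℝ) : Set (ℂ × ℝ) :=
  {p : ℂ × ℝ | |p.2 - ‖p.1‖| ≤ δ ∧ p.1 ∈ GammaD δ μ ∧ ‖p.1‖ ∈ J}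

noncomputable def rot (σ : ℝ) : ℂ → ℂ := fun z => Complex.exp (σ * Complex.I) * z

noncomputable def pPt (δ ℓ η' η'' : ℝ) : ℂ :=
  ⟨(η' + η'') * Real.cos (ℓ * Real.sqrt δ), (η' - η'') * Real.sin (ℓ * Real.sqrt δ)⟩

def rect (p : ℂ) (a b : ℝ) : Set ℂ :=
  {z : ℂ | |z.re - p.re| ≤ a ∧ |z.im - p.im| ≤ b}

noncomputable def curveE (η' η'' : ℝ) : Set ℂ :=
  if η' = η'' then {ξ : ℂ | ξ.im = 0 ∧ 1 ≤ ξ.re ∧ ξ.re ≤ η' + η''}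
  else {ξ : ℂ | ξ.re ^ 2 / (η' + η'') ^ 2 + ξ.im ^ 2 / (η' - η'') ^ 2 = 1 ∧
        1 ≤ ξ.re ∧ ξ.re ≤ η' + η'' ∧ (η'' ≤ η' → 0 ≤ ξ.im) ∧ (η' ≤ η'' → ξ.im ≤ 0)}

noncomputable def tildeE (η' η'' : ℝ) : Set ℂ :=
  curveE η' η'' ∪ {ξ : ℂ | ξ.im = 0 ∧ η' + η'' ≤ ξ.re ∧ ξ.re ≤ 5}

noncomputable def E00 (δ c₁ c₂ η a₁ b₁ a₂ b₂ : ℝ) : Set ℂ :=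
  {z : ℂ | ∃ k : ℕ, ∃ η' η'' : ℝ,
    (k : ℝ) / 2 ≤ Real.pi / 8 * (Real.sqrt δ)⁻¹ - 1 ∧
    η' ∈ Set.Icc a₁ b₁ ∧ η'' ∈ Set.Icc a₂ b₂ ∧ η' + η'' = η ∧
    z ∈ rect (pPt δ ((k : ℝ) / 2) η' η'')
          (c₁ * max ((k : ℝ) / 2) (1 / 2) * δ) ((c₂ + 4) * Real.sqrt δ)}


set_option maxHeartbeats 1000000


lemma sinUB {x : ℝ} (h0 : 0 ≤ x) : Real.sin x ≤ x := by
  rcases eq_or_lt_of_le h0 with h | h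
  · simp [← h]
  · exact (Real.sin_lt h).le

lemma sinLB {x : ℝ} (h0 : 0 ≤ x) (h1 : x ≤ 0.394) : 0.96 * x ≤ Real.sin x := by
  rcases eq_or_lt_of_le h0 with h | h
  · simp [← h]
  · have := Real.sin_gt_sub_cube h
    nlinarith [mul_le_mul_of_nonneg_right h1 (sq_nonneg x)]

lemma cosLB (x : ℝ) : 1 - x ^ 2 / 2 ≤ Real.cos x := Real.one_sub_sq_div_two_le_cos

lemma cos_half_sq (x : ℝ) : Real.cos x = 1 - 2 * Real.sin (x / 2) ^ 2 := by
  have h1 := Real.cos_sq (x / 2)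
  have h2 := Real.sin_sq_add_cos_sq (x / 2)
  have : 2 * (x / 2) = x := by ring
  rw [this] at h1
  linarith

lemma cosUB {x : ℝ} (h0 : 0 ≤ x) (h1 : x ≤ 0.394) : Real.cos x ≤ 1 - 0.46 * x ^ 2 := by
  have h2 : 0.96 * (x / 2) ≤ Real.sin (x / 2) := sinLB (by linarith) (by linarith)
  have h3 : (0:ℝ) ≤ 0.96 * (x / 2) := by linarith
  have h4 := cos_half_sq x
  nlinarith [sq_nonneg (Real.sin (x/2))]

lemma segCore (c₁ c₂ e θ t η d' r y : ℝ)
    (hc₁ : 0 < c₁) (hc₂ : 0 < c₂)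
    (he : 0 < e)
    (hθl : 100 * (c₁ + c₂ + 10) * e ≤ θ) (hθu : θ ≤ 0.394)
    (ht0 : 0 ≤ t) (htu : t ≤ 0.394)
    (hη1 : 1.99 ≤ η) (hη2 : η ≤ 4.01)
    (hd' : |d'| ≤ 1.01) (hr5 : r ≤ 5)
    (hcase : (1 ≤ r ∧ |d'| ≤ 3 * e) ∨ η ≤ r)
    (hA : |r * Real.cos θ - η * Real.cos t| ≤ c₁ * (t + e) * e)
    (hB : |y - d' * Real.sin t| ≤ (c₂ + 4) * e)
    (hy : |y| = r * Real.sin θ) : False := by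
  have hθ0 : 0 < θ := lt_of_lt_of_le (by positivity) hθl
  set S := Real.sin θ with hSdef
  set C := Real.cos θ with hCdef
  set s := Real.sin t with hsdef
  set c := Real.cos t with hcdef
  have hS1 : S ≤ θ := sinUB hθ0.le
  have hS0 : 0.96 * θ ≤ S := sinLB hθ0.le hθu
  have hs1 : s ≤ t := sinUB ht0
  have hs0 : 0.96 * t ≤ s := sinLB ht0 htu
  have hC1 : C ≤ 1 := Real.cos_le_one θ
  have hC0 : 0.92 ≤ C := by have := cosLB θ; nlinarith only [this, hθu, hθ0]
  have hc1 : c ≤ 1 - 0.46 * t ^ 2 := cosUB ht0 htu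
  have hC2 : 1 - θ ^ 2 / 2 ≤ C := cosLB θ
  have hsnn : 0 ≤ s := by linarith only [hs0, mul_nonneg (show (0:ℝ) ≤ 0.96 by norm_num) ht0]
  have hSnn : 0 ≤ S := by nlinarith only [hS0, hθ0]
  have hDnn : 0 ≤ |d'| := abs_nonneg d'
  have hyb : r * S ≤ |d'| * s + (c₂ + 4) * e := by
    have h1 := abs_sub_abs_le_abs_sub y (d' * s)
    have h2 : |d' * s| = |d'| * s := by rw [abs_mul, abs_of_nonneg hsnn]
    rw [hy, h2] at h1
    linarith only [h1, hB]
  have heθ : e ≤ θ / 1000 := by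
    nlinarith only [hθl, mul_nonneg (show (0:ℝ) ≤ c₁ + c₂ by linarith only [hc₁, hc₂]) he.le]
  rcases hcase with ⟨hr1, hd3⟩ | hrη
  · -- degenerate segment case
    have h3 : S ≤ r * S := by
      nlinarith only [mul_nonneg (sub_nonneg.2 hr1) hSnn]
    have h4 : |d'| * s ≤ 3 * e * 0.394 :=
      mul_le_mul hd3 (by linarith only [hs1, htu]) hsnn (by positivity)
    have h5 : 0.96 * θ ≤ 3 * e * 0.394 + (c₂ + 4) * e := by
      linarith only [hS0, h3, h4, hyb]
    have h6 : (96 * c₁ + 95 * c₂ + 954) * e ≤ 0 := by nlinarith only [h5, hθl, he.le]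
    nlinarith only [h6, mul_pos (show (0:ℝ) < 96 * c₁ + 95 * c₂ + 954 by
      nlinarith only [hc₁, hc₂]) he]
  · -- outer segment case
    have hrS : 1.99 * (0.96 * θ) ≤ r * S :=
      mul_le_mul (by linarith only [hη1, hrη]) hS0 (by positivity) (by linarith only [hη1, hrη])
    have hds : |d'| * s ≤ 1.01 * s := mul_le_mul_of_nonneg_right hd' hsnn
    have hce : (c₂ + 4) * e ≤ θ / 100 := by
      nlinarith only [hθl, mul_nonneg (show (0:ℝ) ≤ c₁ + 6 by linarith only [hc₁]) he.le]
    have hslb : 1.88 * θ ≤ s := by linarith only [hyb, hrS, hds, hce, hθ0.le]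
    have htlb : 1.88 * θ ≤ t := le_trans hslb hs1
    have ht0' : 0 < t := by linarith only [htlb, hθ0]
    rw [abs_le] at hA
    have h6 : η * (C - c) ≤ c₁ * (t + e) * e := by
      nlinarith only [hA.2, mul_nonneg (sub_nonneg.2 hrη) (show (0:ℝ) ≤ C by linarith only [hC0])]
    have hθt : θ ^ 2 ≤ 0.2831 * t ^ 2 := by
      nlinarith only [mul_nonneg (sub_nonneg.2 htlb) (show (0:ℝ) ≤ t + 1.88 * θ by
        linarith only [ht0, hθ0])]
    have h7 : 0.318 * t ^ 2 ≤ C - c := by linarith only [hC2, hc1, hθt, sq_nonneg t]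
    have h9 : c₁ * e ≤ 0.006 * t := by
      have : c₁ * e ≤ 0.01 * θ := by
        nlinarith only [hθl, mul_nonneg (show (0:ℝ) ≤ c₂ + 10 by linarith only [hc₂]) he.le]
      linarith only [this, htlb, ht0]
    have h10 : c₁ * (t + e) * e ≤ 0.006 * t * (t + e) := by
      have := mul_le_mul_of_nonneg_right h9 (show (0:ℝ) ≤ t + e by linarith only [ht0, he])
      nlinarith only [this]
    have h11 : e ≤ t := by linarith only [heθ, htlb, hθ0]
    nlinarith only [h6, h7, h10, h11, ht0', hη1, mul_pos ht0' ht0',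
      mul_le_mul_of_nonneg_left h7 (show (0:ℝ) ≤ η - 1.99 by linarith only [hη1]),
      mul_le_mul_of_nonneg_right h11 (show (0:ℝ) ≤ 0.006 * t by linarith only [ht0])]

lemma mulAbsLe {m M x b : ℝ} (h0 : 0 ≤ m) (hM : m ≤ M) (hx : |x| ≤ b) : |m * x| ≤ M * b := by
  rw [abs_mul, abs_of_nonneg h0]
  exact mul_le_mul hM hx (abs_nonneg x) (h0.trans hM)

lemma ellipseCore (c₁ c₂ e θ t η d d' cφ sφ : ℝ)
    (hc₁ : 0 < c₁) (hc₂ : 0 < c₂) (he : 0 < e)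
    (hθl : 100 * (c₁ + c₂ + 10) * e ≤ θ) (hθu : θ ≤ 0.394)
    (ht0 : 0 ≤ t) (htu : t ≤ 0.394)
    (hη1 : 1.99 ≤ η) (hη2 : η ≤ 4.01)
    (hd : |d| ≤ 1.01) (hdd : |d' - d| ≤ 3 * e)
    (hφ : cφ ^ 2 + sφ ^ 2 = 1) (hsφ : 0 ≤ sφ)
    (hA : |η * cφ * Real.cos θ - d * sφ * Real.sin θ - η * Real.cos t| ≤ c₁ * (t + e) * e)
    (hB : |η * cφ * Real.sin θ + d * sφ * Real.cos θ - d' * Real.sin t| ≤ (c₂ + 4) * e) :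
    False := by
  have hθ0 : 0 < θ := lt_of_lt_of_le (by positivity) hθl
  set S := Real.sin θ with hSdef
  set C := Real.cos θ with hCdef
  set s := Real.sin t with hsdef
  set c := Real.cos t with hcdef
  have hS1 : S ≤ θ := sinUB hθ0.le
  have hS0 : 0.96 * θ ≤ S := sinLB hθ0.le hθu
  have hs1 : s ≤ t := sinUB ht0
  have hs0 : 0.96 * t ≤ s := sinLB ht0 htu
  have hC1 : C ≤ 1 := Real.cos_le_one θ
  have hc1 : c ≤ 1 := Real.cos_le_one t
  have hC0 : 0.922 ≤ C := by
    have := cosLB θ; nlinarith only [this, hθu, hθ0]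
  have hc0 : 0.922 ≤ c := by
    have := cosLB t; nlinarith only [this, htu, ht0]
  have hsnn : 0 ≤ s := by nlinarith only [hs0, ht0]
  have hSpos : 0 < S := by nlinarith only [hS0, hθ0]
  have hSnn : 0 ≤ S := hSpos.le
  have hS394 : S ≤ 0.394 := hS1.trans hθu
  have hs394 : s ≤ 0.394 := hs1.trans htu
  have hCS : S ^ 2 + C ^ 2 = 1 := Real.sin_sq_add_cos_sq θ
  have hcs : s ^ 2 + c ^ 2 = 1 := Real.sin_sq_add_cos_sq t
  clear_value S C s c
  have heθ : e ≤ θ / 1000 := by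
    nlinarith only [hθl, mul_nonneg (show (0:ℝ) ≤ c₁ + c₂ by linarith only [hc₁, hc₂]) he.le]
  have hθ1000 : 1000 * e ≤ θ := by linarith only [heθ]
  have hdle := abs_le.mp hd
  have hcφ1 : cφ ≤ 1 := by nlinarith only [hφ, sq_nonneg sφ, sq_nonneg (cφ - 1)]
  have hcφm1 : -1 ≤ cφ := by nlinarith only [hφ, sq_nonneg sφ, sq_nonneg (cφ + 1)]
  have hsφ1 : sφ ≤ 1 := by nlinarith only [hφ, sq_nonneg cφ, sq_nonneg (sφ - 1)]
  have hηsφ : 0 ≤ η * sφ := mul_nonneg (by linarith only [hη1]) hsφ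
  have hd2 : d ^ 2 ≤ 1.0201 := by nlinarith only [hdle.1, hdle.2]
  have hη2d : 2.93 ≤ η ^ 2 - d ^ 2 := by nlinarith only [hη1, hd2]
  -- residuals
  set X := η * cφ * C - d * sφ * S - η * c with hXdef
  set Y := η * cφ * S + d * sφ * C - d' * s with hYdef
  set A2 := η * cφ - η * c * C - d * s * S with hA2def
  set B2 := d * sφ - d * s * C + η * c * S with hB2def
  set α := c₁ * (t + e) + (c₂ + 5.2) * θ with hαdef
  clear_value X Y A2 B2 α
  have hα0 : 0 ≤ α := by
    rw [hαdef]
    have : 0 ≤ c₁ * (t + e) := mul_nonneg hc₁.le (by linarith only [ht0, he])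
    have h2 : 0 ≤ (c₂ + 5.2) * θ := mul_nonneg (by linarith only [hc₂]) hθ0.le
    linarith only [this, h2]
  have hα0e : 0 ≤ α * e := mul_nonneg hα0 he.le
  have keyA : A2 = C * X + S * Y + (S * s) * (d' - d) := by
    rw [hA2def, hXdef, hYdef]
    linear_combination (-(η * cφ)) * hCS
  have keyB : B2 = C * Y - S * X + (C * s) * (d' - d) := by
    rw [hB2def, hXdef, hYdef]
    linear_combination (-(d * sφ)) * hCS
  have hA2abs : |A2| ≤ α * e := by
    have t1 : |C * X + S * Y + S * s * (d' - d)| ≤ |C * X| + |S * Y| + |S * s * (d' - d)| :=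
      abs_add_three _ _ _
    rw [keyA]
    have m1 : |C * X| ≤ 1 * (c₁ * (t + e) * e) := mulAbsLe (by linarith only [hC0]) hC1 hA
    have m2 : |S * Y| ≤ θ * ((c₂ + 4) * e) := mulAbsLe hSnn hS1 hB
    have m3 : |S * s * (d' - d)| ≤ (θ * 0.394) * (3 * e) :=
      mulAbsLe (mul_nonneg hSnn hsnn) (mul_le_mul hS1 hs394 hsnn hθ0.le) hdd
    have hθe : 0 ≤ θ * e := mul_nonneg hθ0.le he.le
    rw [hαdef, abs_le] at *
    constructor <;> nlinarith only [t1, m1, m2, m3, hθe, abs_nonneg (C*X), abs_nonneg (S*Y), abs_nonneg (S*s*(d'-d))]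
  have hB2abs : |B2| ≤ (0.16 * c₁ + c₂ + 5.19) * e := by
    have t1 : |C * Y - S * X + C * s * (d' - d)| ≤ |C * Y| + |S * X| + |C * s * (d' - d)| := by
      have := abs_add_three (C * Y) (-(S * X)) (C * s * (d' - d))
      simpa [sub_eq_add_neg] using this
    rw [keyB]
    have m4 : |C * Y| ≤ 1 * ((c₂ + 4) * e) := mulAbsLe (by linarith only [hC0]) hC1 hB
    have m5 : |S * X| ≤ 0.394 * (c₁ * (t + e) * e) := mulAbsLe hSnn hS394 hA
    have m6 : |C * s * (d' - d)| ≤ (1 * 0.394) * (3 * e) :=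
      mulAbsLe (mul_nonneg (by linarith only [hC0]) hsnn)
        (mul_le_mul hC1 hs394 hsnn zero_le_one) hdd
    have hte : t + e ≤ 0.3944 := by linarith only [htu, heθ, hθu]
    have h1 : c₁ * (t + e) ≤ c₁ * 0.3944 := mul_le_mul_of_nonneg_left hte hc₁.le
    have h2 : c₁ * (t + e) * e ≤ c₁ * 0.3944 * e := mul_le_mul_of_nonneg_right h1 he.le
    nlinarith only [t1, m4, m5, m6, h2, mul_nonneg hc₁.le he.le, he.le, abs_nonneg (S*X)]
  -- geometry
  set s₂ := η * s * C - d * c * S with hs₂def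
  set cc := η * c * C + d * s * S with hccdef
  clear_value s₂ cc
  have hQnn : 0 ≤ s₂ ^ 2 + (η ^ 2 - d ^ 2) * S ^ 2 := by
    have := mul_nonneg (show (0:ℝ) ≤ η ^ 2 - d ^ 2 by linarith only [hη2d]) (sq_nonneg S)
    linarith only [this, sq_nonneg s₂]
  set u := Real.sqrt (s₂ ^ 2 + (η ^ 2 - d ^ 2) * S ^ 2) with hudef
  have hu2 : u ^ 2 = s₂ ^ 2 + (η ^ 2 - d ^ 2) * S ^ 2 := Real.sq_sqrt hQnn
  have hu0 : 0 ≤ u := Real.sqrt_nonneg _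
  clear_value u
  have hident : cc ^ 2 + (s₂ ^ 2 + (η ^ 2 - d ^ 2) * S ^ 2) = η ^ 2 := by
    rw [hccdef, hs₂def]
    linear_combination (η ^ 2 * C ^ 2 + d ^ 2 * S ^ 2) * hcs + η ^ 2 * hCS
  have hA2cc : η * cφ - cc = A2 := by rw [hA2def, hccdef]; ring
  have hccabs : |cc| ≤ η := by
    have hcs2 : cc ^ 2 ≤ η ^ 2 := by linarith only [hident, hQnn]
    have h := Real.sqrt_le_sqrt hcs2
    rwa [Real.sqrt_sq_eq_abs, Real.sqrt_sq (by linarith only [hη1] : (0:ℝ) ≤ η)] at h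
  have hsum8 : |cc + η * cφ| ≤ 8.02 := by
    have h1 := abs_add_le cc (η * cφ)
    have h2 : |η * cφ| ≤ 4.01 * 1 :=
      mulAbsLe (by linarith only [hη1]) hη2 (abs_le.mpr ⟨hcφm1, hcφ1⟩)
    linarith only [h1, h2, hccabs, hη2]
  have hA2abs' : |cc - η * cφ| ≤ α * e := by
    rw [show cc - η * cφ = -A2 by linarith only [hA2cc], abs_neg]
    exact hA2abs
  have hdiff : η ^ 2 * sφ ^ 2 - (s₂ ^ 2 + (η ^ 2 - d ^ 2) * S ^ 2)
      = (cc - η * cφ) * (cc + η * cφ) := by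
    linear_combination η ^ 2 * hφ - hident
  have habs1 : |η ^ 2 * sφ ^ 2 - (s₂ ^ 2 + (η ^ 2 - d ^ 2) * S ^ 2)| ≤ (α * e) * 8.02 := by
    rw [hdiff, abs_mul]
    exact mul_le_mul hA2abs' hsum8 (abs_nonneg _) hα0e
  have hsum0 : 0 ≤ η * sφ + u := by linarith only [hηsφ, hu0]
  have habs2 : |η * sφ - u| * (η * sφ + u) ≤ (α * e) * 8.02 := by
    have e2 : (η * sφ - u) * (η * sφ + u) = η ^ 2 * sφ ^ 2 - (s₂ ^ 2 + (η ^ 2 - d ^ 2) * S ^ 2) := by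
      linear_combination -hu2
    calc |η * sφ - u| * (η * sφ + u) = |(η * sφ - u) * (η * sφ + u)| := by
          rw [abs_mul, abs_of_nonneg hsum0]
      _ = |η ^ 2 * sφ ^ 2 - (s₂ ^ 2 + (η ^ 2 - d ^ 2) * S ^ 2)| := by rw [e2]
      _ ≤ (α * e) * 8.02 := habs1
  -- lower bounds for u
  have hS2 : (0.96 * θ) ^ 2 ≤ S ^ 2 := by nlinarith only [hS0, hθ0, hSnn]
  have hQge : 2.93 * (0.96 * θ) ^ 2 ≤ (η ^ 2 - d ^ 2) * S ^ 2 :=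
    mul_le_mul hη2d hS2 (by positivity) (by linarith only [hη2d])
  have huθ : 1.64 * θ ≤ u := by
    have h1 : (1.64 * θ) ^ 2 ≤ s₂ ^ 2 + (η ^ 2 - d ^ 2) * S ^ 2 := by
      nlinarith only [hQge, sq_nonneg s₂, sq_nonneg θ]
    have h2 := Real.sqrt_le_sqrt h1
    rw [Real.sqrt_sq (by linarith only [hθ0] : (0:ℝ) ≤ 1.64 * θ)] at h2
    rw [hudef]; exact h2
  have huS : 1.711 * S ≤ u := by
    have hS2' : 2.93 * S ^ 2 ≤ (η ^ 2 - d ^ 2) * S ^ 2 :=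
      mul_le_mul_of_nonneg_right hη2d (sq_nonneg S)
    have h1 : (1.711 * S) ^ 2 ≤ s₂ ^ 2 + (η ^ 2 - d ^ 2) * S ^ 2 := by
      nlinarith only [hS2', sq_nonneg s₂, sq_nonneg S]
    have h2 := Real.sqrt_le_sqrt h1
    rw [Real.sqrt_sq (by linarith only [hSnn] : (0:ℝ) ≤ 1.711 * S)] at h2
    rw [hudef]; exact h2
  have habss₂ : |s₂| ≤ u := by
    have h1 : s₂ ^ 2 ≤ s₂ ^ 2 + (η ^ 2 - d ^ 2) * S ^ 2 := by
      nlinarith only [hQge, sq_nonneg θ]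
    have h2 := Real.sqrt_le_sqrt h1
    rw [Real.sqrt_sq_eq_abs] at h2
    rw [hudef]; exact h2
  have hut : 0.82 * t ≤ u := by
    rcases le_or_gt t (2 * θ) with h | h
    · linarith only [huθ, h, ht0, hθ0]
    · have p1 : 1.99 * (0.96 * t) ≤ η * s :=
        mul_le_mul hη1 hs0 (by linarith only [ht0]) (by linarith only [hη1])
      have p2 : (1.99 * (0.96 * t)) * 0.922 ≤ (η * s) * C :=
        mul_le_mul p1 hC0 (by norm_num) (by nlinarith only [p1, ht0])
      have p3 : |d * (c * S)| ≤ 1.01 * θ := by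
        have hcS : |c * S| ≤ θ := by
          rw [abs_of_nonneg (mul_nonneg (by linarith only [hc0]) hSnn)]
          nlinarith only [hc1, hS1, hSnn, hS0, hθ0]
        calc |d * (c * S)| = |d| * |c * S| := abs_mul _ _
          _ ≤ 1.01 * θ := mul_le_mul hd hcS (abs_nonneg _) (by norm_num)
      have p4 : d * c * S ≤ 1.01 * θ := by
        have := le_abs_self (d * (c * S))
        calc d * c * S = d * (c * S) := by ring
          _ ≤ |d * (c * S)| := le_abs_self _
          _ ≤ 1.01 * θ := p3
      have hs₂lb : 1.25 * t ≤ s₂ := by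
        rw [hs₂def]
        nlinarith only [p2, p4, h, ht0]
      calc (0.82 : ℝ) * t ≤ s₂ := by linarith only [hs₂lb, ht0]
        _ ≤ |s₂| := le_abs_self _
        _ ≤ u := habss₂
  -- the key bound |d * (η sφ - u)| ≤ G e
  have hG : |d * (η * sφ - u)| ≤ (10 * c₁ + 5 * c₂ + 26) * e := by
    have step1 : |d * (η * sφ - u)| * (η * sφ + u) ≤ 8.11 * (α * e) := by
      have e1 : |d * (η * sφ - u)| * (η * sφ + u) = |d| * (|η * sφ - u| * (η * sφ + u)) := by
        rw [abs_mul]; ring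
      rw [e1]
      have h2 : |d| * (|η * sφ - u| * (η * sφ + u)) ≤ 1.01 * ((α * e) * 8.02) :=
        mul_le_mul hd habs2 (mul_nonneg (abs_nonneg _) hsum0) (by norm_num)
      nlinarith only [h2, hα0e]
    have hu1640 : 1640 * e ≤ u := by linarith only [huθ, hθ1000]
    have p1 : 9.9 * (c₁ * e) * (0.82 * t) ≤ 9.9 * (c₁ * e) * u :=
      mul_le_mul_of_nonneg_left hut (by nlinarith only [mul_pos hc₁ he])
    have p2 : 0.1 * (c₁ * e) * (1640 * e) ≤ 0.1 * (c₁ * e) * u :=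
      mul_le_mul_of_nonneg_left hu1640 (by nlinarith only [mul_pos hc₁ he])
    have p3 : (5 * c₂ + 26) * e * (1.64 * θ) ≤ (5 * c₂ + 26) * e * u :=
      mul_le_mul_of_nonneg_left huθ (by nlinarith only [mul_pos hc₂ he, he])
    have step2 : 8.11 * (α * e) ≤ ((10 * c₁ + 5 * c₂ + 26) * e) * u := by
      rw [hαdef]
      nlinarith only [p1, p2, p3, mul_nonneg (mul_nonneg hc₁.le ht0) he.le,
        mul_nonneg (mul_nonneg hc₁.le he.le) he.le,
        mul_nonneg (mul_nonneg hc₂.le hθ0.le) he.le,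
        mul_nonneg hθ0.le he.le]
    have step3 : |d * (η * sφ - u)| * (η * sφ + u)
        ≤ ((10 * c₁ + 5 * c₂ + 26) * e) * (η * sφ + u) := by
      have h4 : ((10 * c₁ + 5 * c₂ + 26) * e) * u ≤ ((10 * c₁ + 5 * c₂ + 26) * e) * (η * sφ + u) :=
        mul_le_mul_of_nonneg_left (by linarith only [hηsφ]) (by nlinarith only [mul_pos hc₁ he, mul_pos hc₂ he, he])
      linarith only [step1, step2, h4]
    have hpos : 0 < η * sφ + u := by linarith only [hηsφ, huθ, hθ0]
    exact le_of_mul_le_mul_right step3 hpos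
  -- lower bound for Y' := d (u - s₂) + (η² - d²) c S
  have hcS0 : 2.93 * (0.922 * (0.96 * θ)) ≤ (η ^ 2 - d ^ 2) * (c * S) := by
    have h1 : 0.922 * (0.96 * θ) ≤ c * S :=
      mul_le_mul hc0 hS0 (by linarith only [hθ0]) (by linarith only [hc0])
    exact mul_le_mul hη2d h1 (by positivity) (by linarith only [hη2d])
  have hYlow : 0.93 * θ ≤ d * (u - s₂) + (η ^ 2 - d ^ 2) * (c * S) := by
    rcases le_or_gt 0 d with hd0 | hd0
    · have h1 : 0 ≤ d * (u - s₂) := mul_nonneg hd0 (by linarith only [habss₂, le_abs_self s₂])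
      nlinarith only [h1, hcS0, hθ0]
    · have hs₂0 : 0 ≤ s₂ := by
        rw [hs₂def]
        have h1 : 0 ≤ η * s * C :=
          mul_nonneg (mul_nonneg (by linarith only [hη1]) hsnn) (by linarith only [hC0])
        have h2 : 0 ≤ (-d) * (c * S) :=
          mul_nonneg (by linarith only [hd0]) (mul_nonneg (by linarith only [hc0]) hSnn)
        nlinarith only [h1, h2]
      have hx0 : 0 ≤ u - s₂ := by linarith only [habss₂, le_abs_self s₂]
      have hprod : (u - s₂) * (u + s₂) = (η ^ 2 - d ^ 2) * S ^ 2 := by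
        linear_combination hu2
      have h171 : 1.711 * S ≤ u + s₂ := by linarith only [huS, hs₂0]
      have key : (u - s₂) * (1.711 * S) ≤ (η ^ 2 - d ^ 2) * S ^ 2 := by
        calc (u - s₂) * (1.711 * S) ≤ (u - s₂) * (u + s₂) :=
              mul_le_mul_of_nonneg_left h171 hx0
          _ = (η ^ 2 - d ^ 2) * S ^ 2 := hprod
      have husq : u - s₂ ≤ 0.585 * ((η ^ 2 - d ^ 2) * S) := by
        have h7 : 0 ≤ (η ^ 2 - d ^ 2) * S := mul_nonneg (by linarith only [hη2d]) hSnn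
        have h5 : (u - s₂) * (1.711 * S) ≤ (0.585 * ((η ^ 2 - d ^ 2) * S)) * (1.711 * S) := by
          nlinarith only [key, mul_nonneg h7 hSnn]
        exact le_of_mul_le_mul_right h5 (by nlinarith only [hSpos])
      have h8 : -1.01 * (u - s₂) ≤ d * (u - s₂) :=
        mul_le_mul_of_nonneg_right hdle.1 hx0
      have h9 : 1.01 * (u - s₂) ≤ 1.01 * (0.585 * ((η ^ 2 - d ^ 2) * S)) := by
        nlinarith only [husq]
      have h10 : 0.922 * ((η ^ 2 - d ^ 2) * S) ≤ (η ^ 2 - d ^ 2) * (c * S) := by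
        have h11 : 0 ≤ (η ^ 2 - d ^ 2) * S := mul_nonneg (by linarith only [hη2d]) hSnn
        nlinarith only [mul_le_mul_of_nonneg_left hc0 h11]
      have h12 : 2.93 * (0.96 * θ) ≤ (η ^ 2 - d ^ 2) * S :=
        mul_le_mul hη2d hS0 (by linarith only [hθ0]) (by linarith only [hη2d])
      nlinarith only [h8, h9, h10, h12, hθ0]
  have hYB : d * (u - s₂) + (η ^ 2 - d ^ 2) * (c * S) = η * B2 - d * (η * sφ - u) := by
    rw [hB2def, hs₂def]
    ring
  have hfin1 : η * B2 ≤ 4.01 * ((0.16 * c₁ + c₂ + 5.19) * e) := by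
    have h1 : η * B2 ≤ η * |B2| := mul_le_mul_of_nonneg_left (le_abs_self B2)
      (by linarith only [hη1])
    have h2 : η * |B2| ≤ 4.01 * ((0.16 * c₁ + c₂ + 5.19) * e) :=
      mul_le_mul hη2 hB2abs (abs_nonneg _) (by norm_num)
    linarith only [h1, h2]
  have hfin2 : -(d * (η * sφ - u)) ≤ (10 * c₁ + 5 * c₂ + 26) * e := by
    calc -(d * (η * sφ - u)) ≤ |-(d * (η * sφ - u))| := le_abs_self _
      _ = |d * (η * sφ - u)| := abs_neg _
      _ ≤ (10 * c₁ + 5 * c₂ + 26) * e := hG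
  have hfinal : 0.93 * θ ≤ (10.65 * c₁ + 9.01 * c₂ + 46.82) * e := by
    have := hYlow
    rw [hYB] at this
    nlinarith only [this, hfin1, hfin2, mul_nonneg hc₁.le he.le, mul_nonneg hc₂.le he.le, he.le]
  nlinarith only [hfinal, hθl, mul_pos hc₁ he, mul_pos hc₂ he, he]

lemma rot_re (x : ℝ) (w : ℂ) : (rot x w).re = Real.cos x * w.re - Real.sin x * w.im := by
  simp [rot, Complex.mul_re, Complex.exp_ofReal_mul_I_re, Complex.exp_ofReal_mul_I_im]

lemma rot_im (x : ℝ) (w : ℂ) : (rot x w).im = Real.sin x * w.re + Real.cos x * w.im := by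
  simp [rot, Complex.mul_im, Complex.exp_ofReal_mul_I_re, Complex.exp_ofReal_mul_I_im]
  ring

lemma notMemE00 (c₁ c₂ δ α₁ β₁ α₂ β₂ η' η'' a ε : ℝ) (hε : ε = 1 ∨ ε = -1)
    (hc₁ : 0 < c₁) (hc₂ : 0 < c₂) (hδ : 0 < δ) (hδ6 : δ < 1 / 1000000)
    (hα₁ : 1 ≤ α₁) (hβ₁ : α₁ ≤ β₁) (hβ₁2 : β₁ ≤ 2) (hJ₁ : β₁ - α₁ ≤ Real.sqrt δ)
    (hα₂ : 1 ≤ α₂) (hβ₂ : α₂ ≤ β₂) (hβ₂2 : β₂ ≤ 2) (hJ₂ : β₂ - α₂ ≤ Real.sqrt δ)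
    (hη' : η' ∈ Set.Icc (α₁ - δ) (β₁ + δ)) (hη'' : η'' ∈ Set.Icc (α₂ - δ) (β₂ + δ))
    (ha : 100 * (c₁ + c₂ + 10) ≤ a) (ha2 : a ≤ Real.pi / 8 * (Real.sqrt δ)⁻¹)
    (w : ℂ) (hw : w ∈ tildeE η' η'') :
    rot (ε * (a * Real.sqrt δ)) w ∉
      E00 δ c₁ c₂ (η' + η'') (α₁ - δ) (β₁ + δ) (α₂ - δ) (β₂ + δ) := by
  intro hz
  set e := Real.sqrt δ with hedef
  have he : 0 < e := Real.sqrt_pos.mpr hδ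
  have he2 : e ^ 2 = δ := Real.sq_sqrt hδ.le
  have he1 : e ≤ 1 / 1000 := by nlinarith only [he2, hδ6, he]
  obtain ⟨k, p, q, hk, hp, hq, hpq, hrect⟩ := hz
  set θ := a * e with hθdef
  set t := (k : ℝ) / 2 * e with htdef
  have hθl : 100 * (c₁ + c₂ + 10) * e ≤ θ := mul_le_mul_of_nonneg_right ha he.le
  have hθ0 : 0 < θ := lt_of_lt_of_le (by positivity) hθl
  have hpi : Real.pi < 3.15 := Real.pi_lt_d2
  have hpi3 : 3 < Real.pi := Real.pi_gt_three
  have hae : a * e ≤ Real.pi / 8 := by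
    have h1 := mul_le_mul_of_nonneg_right ha2 he.le
    rwa [mul_assoc, inv_mul_cancel₀ (ne_of_gt he), mul_one] at h1
  have hθu : θ ≤ 0.394 := by
    rw [hθdef]; nlinarith only [hae, hpi]
  have hk0 : (0:ℝ) ≤ (k : ℝ) / 2 := by positivity
  have ht0 : 0 ≤ t := by rw [htdef]; positivity
  have htu : t ≤ 0.394 := by
    have h1 := mul_le_mul_of_nonneg_right hk (he.le)
    rw [sub_mul, mul_assoc, inv_mul_cancel₀ (ne_of_gt he), mul_one, one_mul] at h1
    rw [htdef]; nlinarith only [h1, hpi, he]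
  have hδe : δ ≤ 0.001 * e := by nlinarith only [he2, he1, he]
  have hη1 : 1.99 ≤ η' + η'' := by
    nlinarith only [hη'.1, hη''.1, hα₁, hα₂, hδ6, hδ]
  have hη2 : η' + η'' ≤ 4.01 := by
    nlinarith only [hη'.2, hη''.2, hβ₁2, hβ₂2, hδ6, hδ]
  have hdabs : |η' - η''| ≤ 1.01 := by
    rw [abs_le]
    constructor
    · nlinarith only [hη'.1, hη''.2, hα₁, hβ₂2, hδ6, hδ]
    · nlinarith only [hη'.2, hη''.1, hβ₁2, hα₂, hδ6, hδ]
  have hd'abs : |p - q| ≤ 1.01 := by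
    rw [abs_le]
    constructor
    · nlinarith only [hp.1, hq.2, hα₁, hβ₂2, hδ6, hδ]
    · nlinarith only [hp.2, hq.1, hβ₁2, hα₂, hδ6, hδ]
  have hdd : |(p - q) - (η' - η'')| ≤ 3 * e := by
    rw [abs_le]
    constructor
    · nlinarith only [hp.1, hq.2, hη'.2, hη''.1, hJ₁, hJ₂, hδe, he]
    · nlinarith only [hp.2, hq.1, hη'.1, hη''.2, hJ₁, hJ₂, hδe, he]
  obtain ⟨hr1, hr2⟩ := hrect
  have hppre : (pPt δ ((k : ℝ) / 2) p q).re = (η' + η'') * Real.cos t := by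
    simp only [pPt, htdef, hedef, hpq]
  have hppim : (pPt δ ((k : ℝ) / 2) p q).im = (p - q) * Real.sin t := by
    simp only [pPt, htdef, hedef]
  rw [hppre] at hr1
  rw [hppim] at hr2
  have hwidth : c₁ * max ((k : ℝ) / 2) (1 / 2) * δ ≤ c₁ * (t + e) * e := by
    have hmax : max ((k : ℝ) / 2) (1 / 2) ≤ (k : ℝ) / 2 + 1 / 2 :=
      max_le (by linarith only [hk0]) (by linarith only [hk0])
    have h2 : c₁ * max ((k : ℝ) / 2) (1 / 2) ≤ c₁ * ((k : ℝ) / 2 + 1 / 2) :=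
      mul_le_mul_of_nonneg_left hmax hc₁.le
    have h3 : c₁ * max ((k : ℝ) / 2) (1 / 2) * δ ≤ c₁ * ((k : ℝ) / 2 + 1 / 2) * δ :=
      mul_le_mul_of_nonneg_right h2 hδ.le
    have h4 : c₁ * ((k : ℝ) / 2 + 1 / 2) * δ = c₁ * (t + e / 2) * e := by
      rw [htdef, ← he2]; ring
    have h5 : c₁ * (t + e / 2) * e ≤ c₁ * (t + e) * e := by
      have h6 : c₁ * (t + e / 2) ≤ c₁ * (t + e) :=
        mul_le_mul_of_nonneg_left (by linarith only [he]) hc₁.le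
      exact mul_le_mul_of_nonneg_right h6 he.le
    rw [h4] at h3
    linarith only [h3, h5]
  have hA0 : |(rot (ε * (a * e)) w).re - (η' + η'') * Real.cos t| ≤ c₁ * (t + e) * e :=
    le_trans hr1 hwidth
  have hB0 : |(rot (ε * (a * e)) w).im - (p - q) * Real.sin t| ≤ (c₂ + 4) * e := hr2
  have hcosε : Real.cos (ε * (a * e)) = Real.cos θ := by
    rcases hε with h | h <;> rw [h] <;> simp [hθdef, Real.cos_neg]
  have hsinε : Real.sin (ε * (a * e)) = ε * Real.sin θ := by
    rcases hε with h | h <;> rw [h] <;> simp [hθdef, Real.sin_neg]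
  rw [rot_re, hcosε, hsinε] at hA0
  rw [rot_im, hcosε, hsinε] at hB0
  have hSnn : 0 ≤ Real.sin θ :=
    Real.sin_nonneg_of_nonneg_of_le_pi hθ0.le (by nlinarith only [hθu, hpi3])
  rcases hw with hw | hw
  · by_cases hηq : η' = η''
    · rw [curveE, if_pos hηq] at hw
      obtain ⟨him, hre1, hre2⟩ := hw
      have hd3 : |p - q| ≤ 3 * e := by
        have h0 : η' - η'' = 0 := sub_eq_zero_of_eq hηq
        have := hdd
        rw [h0, sub_zero] at this
        exact this
      rw [him] at hA0 hB0
      refine segCore c₁ c₂ e θ t (η' + η'') (p - q) w.re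
        (ε * Real.sin θ * w.re + Real.cos θ * 0) hc₁ hc₂ he hθl hθu ht0 htu hη1 hη2 hd'abs
        (by linarith only [hre2, hη2]) (Or.inl ⟨hre1, hd3⟩) ?_ hB0 ?_
      · have h7 : w.re * Real.cos θ - (η' + η'') * Real.cos t
            = Real.cos θ * w.re - ε * Real.sin θ * 0 - (η' + η'') * Real.cos t := by ring
        rw [h7]; exact hA0
      · have hwr0 : (0:ℝ) ≤ w.re := by linarith only [hre1]
        have h8 : ε * Real.sin θ * w.re + Real.cos θ * 0 = ε * (Real.sin θ * w.re) := by ring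
        rw [h8, abs_mul]
        have h9 : |ε| = 1 := by rcases hε with h | h <;> rw [h] <;> norm_num
        rw [h9, one_mul, abs_of_nonneg (mul_nonneg hSnn hwr0)]
        ring
    · rw [curveE, if_neg hηq] at hw
      obtain ⟨hell, hre1, hre2, him1, him2⟩ := hw
      have hdne : η' - η'' ≠ 0 := sub_ne_zero.mpr hηq
      set cφ := w.re / (η' + η'') with hcφdef
      set sφ := w.im / (η' - η'') with hsφdef
      have hφ : cφ ^ 2 + sφ ^ 2 = 1 := by
        rw [hcφdef, hsφdef, div_pow, div_pow]; exact hell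
      have hsφ : 0 ≤ sφ := by
        rcases lt_or_gt_of_ne hdne with hlt | hgt
        · have h10 : η' ≤ η'' := by linarith only [hlt]
          exact div_nonneg_of_nonpos (him2 h10) hlt.le
        · have h10 : η'' ≤ η' := by linarith only [hgt]
          exact div_nonneg (him1 h10) hgt.le
      have hwre : (η' + η'') * cφ = w.re := by
        rw [hcφdef]
        field_simp
      have hwim : (η' - η'') * sφ = w.im := by
        rw [hsφdef]
        field_simp
      rcases hε with hε1 | hε1
      · rw [hε1] at hA0 hB0
        refine ellipseCore c₁ c₂ e θ t (η' + η'') (η' - η'') (p - q) cφ sφ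
          hc₁ hc₂ he hθl hθu ht0 htu hη1 hη2 hdabs hdd hφ hsφ ?_ ?_
        · have h7 : (η' + η'') * cφ * Real.cos θ - (η' - η'') * sφ * Real.sin θ
              - (η' + η'') * Real.cos t
              = Real.cos θ * w.re - 1 * Real.sin θ * w.im - (η' + η'') * Real.cos t := by
            rw [← hwre, ← hwim]; ring
          rw [h7]; exact hA0
        · have h7 : (η' + η'') * cφ * Real.sin θ + (η' - η'') * sφ * Real.cos θ
              - (p - q) * Real.sin t
              = 1 * Real.sin θ * w.re + Real.cos θ * w.im - (p - q) * Real.sin t := by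
            rw [← hwre, ← hwim]; ring
          rw [h7]; exact hB0
      · rw [hε1] at hA0 hB0
        refine ellipseCore c₁ c₂ e θ t (η' + η'') (-(η' - η'')) (-(p - q)) cφ sφ
          hc₁ hc₂ he hθl hθu ht0 htu hη1 hη2 (by rwa [abs_neg]) ?_ hφ hsφ ?_ ?_
        · have h6 : -(p - q) - -(η' - η'') = -((p - q) - (η' - η'')) := by ring
          rw [h6, abs_neg]; exact hdd
        · have h7 : (η' + η'') * cφ * Real.cos θ - -(η' - η'') * sφ * Real.sin θ
              - (η' + η'') * Real.cos t
              = Real.cos θ * w.re - -1 * Real.sin θ * w.im - (η' + η'') * Real.cos t := by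
            rw [← hwre, ← hwim]; ring
          rw [h7]; exact hA0
        · have h7 : |(η' + η'') * cφ * Real.sin θ + -(η' - η'') * sφ * Real.cos θ
              - -(p - q) * Real.sin t|
              = |(-1) * Real.sin θ * w.re + Real.cos θ * w.im - (p - q) * Real.sin t| := by
            rw [← abs_neg]
            congr 1
            rw [← hwre, ← hwim]; ring
          rw [h7]; exact hB0
  · obtain ⟨him, hre1, hre2⟩ := hw
    rw [him] at hA0 hB0
    refine segCore c₁ c₂ e θ t (η' + η'') (p - q) w.re
      (ε * Real.sin θ * w.re + Real.cos θ * 0) hc₁ hc₂ he hθl hθu ht0 htu hη1 hη2 hd'abs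
      hre2 (Or.inr hre1) ?_ hB0 ?_
    · have h7 : w.re * Real.cos θ - (η' + η'') * Real.cos t
          = Real.cos θ * w.re - ε * Real.sin θ * 0 - (η' + η'') * Real.cos t := by ring
      rw [h7]; exact hA0
    · have hwr0 : (0:ℝ) ≤ w.re := by linarith only [hre1, hη1]
      have h8 : ε * Real.sin θ * w.re + Real.cos θ * 0 = ε * (Real.sin θ * w.re) := by ring
      rw [h8, abs_mul]
      have h9 : |ε| = 1 := by rcases hε with h | h <;> rw [h] <;> norm_num
      rw [h9, one_mul, abs_of_nonneg (mul_nonneg hSnn hwr0)]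
      ring

lemma rotInv (x : ℝ) (y : ℂ) : rot (-1 * x) (rot x y) = y := by
  unfold rot
  rw [← mul_assoc, ← Complex.exp_add]
  have h : (↑(-1 * x) : ℂ) * Complex.I + ↑x * Complex.I = 0 := by push_cast; ring
  rw [h, Complex.exp_zero, one_mul]

theorem statement14 :
    ∀ c₁ c₂ : ℝ, 0 < c₁ → 0 < c₂ →
    ∃ a₀ : ℝ, 0 < a₀ ∧
      ∀ δ : ℝ, 0 < δ → δ < 1 / 1000000 →
      ∀ α₁ β₁ α₂ β₂ : ℝ,
        1 ≤ α₁ → α₁ ≤ β₁ → β₁ ≤ 2 → β₁ - α₁ ≤ Real.sqrt δ →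
        1 ≤ α₂ → α₂ ≤ β₂ → β₂ ≤ 2 → β₂ - α₂ ≤ Real.sqrt δ →
      ∀ η' ∈ Icc (α₁ - δ) (β₁ + δ),
      ∀ η'' ∈ Icc (α₂ - δ) (β₂ + δ),
      ∀ a : ℝ, a₀ ≤ a → a ≤ Real.pi / 8 * (Real.sqrt δ)⁻¹ →
        (rot (a * Real.sqrt δ) '' tildeE η' η'') ∩
            E00 δ c₁ c₂ (η' + η'') (α₁ - δ) (β₁ + δ) (α₂ - δ) (β₂ + δ) = ∅ ∧
        (rot (a * Real.sqrt δ) ''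
            E00 δ c₁ c₂ (η' + η'') (α₁ - δ) (β₁ + δ) (α₂ - δ) (β₂ + δ)) ∩
          tildeE η' η'' = ∅ := by
  intro c₁ c₂ hc₁ hc₂
  refine ⟨100 * (c₁ + c₂ + 10), by positivity, ?_⟩
  intro δ hδ hδ6 α₁ β₁ α₂ β₂ hα₁ hβ₁ hβ₁2 hJ₁ hα₂ hβ₂ hβ₂2 hJ₂ η' hη' η'' hη'' a ha ha2
  constructor
  · rw [Set.eq_empty_iff_forall_notMem]
    rintro z ⟨⟨w, hw, rfl⟩, hz⟩
    have h := notMemE00 c₁ c₂ δ α₁ β₁ α₂ β₂ η' η'' a 1 (Or.inl rfl) hc₁ hc₂ hδ hδ6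
      hα₁ hβ₁ hβ₁2 hJ₁ hα₂ hβ₂ hβ₂2 hJ₂ hη' hη'' ha ha2 w hw
    rw [one_mul] at h
    exact h hz
  · rw [Set.eq_empty_iff_forall_notMem]
    rintro x ⟨⟨y, hy, hxy⟩, hx⟩
    have h := notMemE00 c₁ c₂ δ α₁ β₁ α₂ β₂ η' η'' a (-1) (Or.inr rfl) hc₁ hc₂ hδ hδ6
      hα₁ hβ₁ hβ₁2 hJ₁ hα₂ hβ₂ hβ₂2 hJ₂ hη' hη'' ha ha2 x hx
    have hinv : y = rot (-1 * (a * Real.sqrt δ)) x := by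
      rw [← hxy, rotInv]
    rw [← hinv] at h
    exact h hy
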